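/- Let w = w₁⋯w_m be a word of length m with letters in {1,…,N}, write S_w = S_{w₁} ∘ ⋯ ∘ S_{w_m}, and let 1 ≤ j < k ≤ N. Then there exists a continuous path γ : [0,1] → ℝ^N with image contained in X, γ(0) = S_w(p_j), γ(1) = S_w(p_k), and length eVariationOn γ [0,1] ≤ 2·(N/(N+2))^m; moreover ‖S_w(p_j) − S_w(p_k)‖ ≥ (N+2)^{−m}, so every such path has length at least (N+2)^{−m}. (Quantitative form of Corollary 2.10.) -/

import Mathlib

open Set Filter

noncomputable section

abbrev E (N : ℕ) := EuclideanSpace ℝ (Fin N)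

/-- Vertex `p_j` of the regular simplex. -/
def gPt (N : ℕ) (j : Fin N) : E N :=
  (Real.sqrt 2)⁻¹ • (EuclideanSpace.single j (1 : ℝ) -
    (N : ℝ)⁻¹ • ∑ i : Fin N, EuclideanSpace.single i (1 : ℝ))

/-- The affine map `S_j`. -/
def gS (N : ℕ) (j : Fin N) (x : E N) : E N :=
  ((N : ℝ) + 2)⁻¹ • x +
    (((N : ℝ) + 2)⁻¹ * (2 + ((N : ℝ) - 1) * (inner ℝ x (gPt N j) : ℝ) / ‖gPt N j‖ ^ 2)) • gPt N j

/-- `S_w = S_{w₁} ∘ ⋯ ∘ S_{w_m}` for a word `w` with letters in `{1,…,N}`. -/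
def gSlist (N : ℕ) : List (Fin N) → (E N → E N)
  | [] => id
  | i :: t => gS N i ∘ gSlist N t

theorem inner_gPt (N : ℕ) (hN : 1 ≤ N) (a b : Fin N) :
    (inner ℝ (gPt N a) (gPt N b) : ℝ) = ((if a = b then 1 else 0) - (N:ℝ)⁻¹)/2 := by
  have hNne : (N:ℝ) ≠ 0 := by
    exact_mod_cast (by omega : N ≠ 0)
  simp only [gPt, real_inner_smul_left, real_inner_smul_right, inner_sub_left, inner_sub_right,
    inner_sum, sum_inner, EuclideanSpace.inner_single_left, EuclideanSpace.single_apply,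
    RCLike.conj_to_real, conj_trivial, one_mul, mul_ite, mul_one, mul_zero]
  simp only [← Finset.mul_sum, Finset.sum_sub_distrib, Finset.sum_ite_eq, Finset.sum_ite_eq',
    Finset.mem_univ, if_true, Finset.sum_const, Finset.card_univ, Fintype.card_fin,
    nsmul_eq_mul, mul_one]
  field_simp
  rw [Real.sq_sqrt (by norm_num)]
  ring

theorem norm_gPt_sq (N : ℕ) (hN : 1 ≤ N) (a : Fin N) :
    ‖gPt N a‖ ^ 2 = ((N:ℝ) - 1)/(2*N) := by
  have hNne : (N:ℝ) ≠ 0 := by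
    exact_mod_cast (by omega : N ≠ 0)
  rw [← real_inner_self_eq_norm_sq, inner_gPt N hN a a, if_pos rfl]
  rw [div_eq_div_iff (by norm_num) (by positivity)]
  field_simp

theorem norm_gPt_sub (N : ℕ) (hN : 1 ≤ N) (a b : Fin N) (hab : a ≠ b) :
    ‖gPt N a - gPt N b‖ = 1 := by
  have hNne : (N:ℝ) ≠ 0 := by
    exact_mod_cast (by omega : N ≠ 0)
  have h : ‖gPt N a - gPt N b‖ ^ 2 = 1 := by
    rw [norm_sub_sq_real, norm_gPt_sq N hN, norm_gPt_sq N hN, inner_gPt N hN a b, if_neg hab]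
    field_simp; ring
  nlinarith [norm_nonneg (gPt N a - gPt N b)]

theorem gS_sub (N : ℕ) (a : Fin N) (v w : E N) :
    gS N a v - gS N a w = ((N:ℝ)+2)⁻¹ •
      ((v - w) + ((((N:ℝ)-1) * (inner ℝ (v-w) (gPt N a) : ℝ)/ ‖gPt N a‖^2)) • gPt N a) := by
  simp only [gS, inner_sub_left, smul_add, smul_smul]
  match_scalars <;> ring

theorem norm_gS_sub_sq (N : ℕ) (hN : 2 ≤ N) (a : Fin N) (v w : E N) :
    ‖gS N a v - gS N a w‖^2 = (((N:ℝ)+2)⁻¹)^2 * (‖v - w‖^2 +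
      ((N:ℝ)^2 - 1) * (inner ℝ (v-w) (gPt N a) : ℝ)^2 / ‖gPt N a‖^2) := by
  have hNpos : (0:ℝ) < N := by exact_mod_cast (by omega : 0 < N)
  have hpp : (0:ℝ) < ‖gPt N a‖^2 := by
    rw [norm_gPt_sq N (by omega) a]
    have : (2:ℝ) ≤ (N:ℝ) := by exact_mod_cast hN
    apply div_pos (by linarith) (by linarith)
  set u := v - w
  set I := (inner ℝ u (gPt N a) : ℝ) with hI
  rw [gS_sub N a v w, norm_smul, mul_pow, norm_add_sq_real, real_inner_smul_right,
    norm_smul, mul_pow]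
  simp only [Real.norm_eq_abs, sq_abs]
  rw [← hI]
  field_simp
  ring

theorem norm_gS_sub_le (N : ℕ) (hN : 2 ≤ N) (a : Fin N) (v w : E N) :
    ‖gS N a v - gS N a w‖ ≤ ((N:ℝ)/((N:ℝ)+2)) * ‖v - w‖ := by
  have hNpos : (0:ℝ) < N := by exact_mod_cast (by omega : 0 < N)
  have hpp : (0:ℝ) < ‖gPt N a‖^2 := by
    rw [norm_gPt_sq N (by omega) a]
    have : (2:ℝ) ≤ (N:ℝ) := by exact_mod_cast hN
    apply div_pos (by linarith) (by linarith)
  have hCS : (inner ℝ (v-w) (gPt N a) : ℝ)^2 ≤ ‖v-w‖^2 * ‖gPt N a‖^2 := by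
    calc (inner ℝ (v-w) (gPt N a) : ℝ)^2 = |(inner ℝ (v-w) (gPt N a) : ℝ)|^2 := (sq_abs _).symm
    _ ≤ (‖v-w‖ * ‖gPt N a‖)^2 :=
        pow_le_pow_left₀ (abs_nonneg _) (abs_real_inner_le_norm _ _) 2
    _ = ‖v-w‖^2 * ‖gPt N a‖^2 := by ring
  have hN2 : (2:ℝ) ≤ (N:ℝ) := by exact_mod_cast hN
  have hsq : ‖gS N a v - gS N a w‖^2 ≤ (((N:ℝ)/((N:ℝ)+2)) * ‖v - w‖)^2 := by
    rw [norm_gS_sub_sq N hN a v w]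
    have h3 : (inner ℝ (v-w) (gPt N a) : ℝ)^2 / ‖gPt N a‖^2 ≤ ‖v-w‖^2 := by
      rw [div_le_iff₀ hpp]; linarith
    have h4 : (0:ℝ) ≤ (N:ℝ)^2 - 1 := by nlinarith
    rw [mul_div_assoc]
    calc ((N:ℝ)+2)⁻¹^2 * (‖v-w‖^2 + ((N:ℝ)^2-1) * ((inner ℝ (v-w) (gPt N a) : ℝ)^2/‖gPt N a‖^2))
        ≤ ((N:ℝ)+2)⁻¹^2 * (‖v-w‖^2 + ((N:ℝ)^2-1) * ‖v-w‖^2) := by gcongr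
      _ = (((N:ℝ)/((N:ℝ)+2)) * ‖v - w‖)^2 := by field_simp; ring
  have h := Real.sqrt_le_sqrt hsq
  rwa [Real.sqrt_sq (norm_nonneg _), Real.sqrt_sq (by positivity)] at h

theorem norm_gS_sub_ge (N : ℕ) (hN : 2 ≤ N) (a : Fin N) (v w : E N) :
    ((N:ℝ)+2)⁻¹ * ‖v - w‖ ≤ ‖gS N a v - gS N a w‖ := by
  have hNpos : (0:ℝ) < N := by exact_mod_cast (by omega : 0 < N)
  have hpp : (0:ℝ) < ‖gPt N a‖^2 := by
    rw [norm_gPt_sq N (by omega) a]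
    have : (2:ℝ) ≤ (N:ℝ) := by exact_mod_cast hN
    apply div_pos (by linarith) (by linarith)
  have hN2 : (2:ℝ) ≤ (N:ℝ) := by exact_mod_cast hN
  have hsq : (((N:ℝ)+2)⁻¹ * ‖v - w‖)^2 ≤ ‖gS N a v - gS N a w‖^2 := by
    rw [norm_gS_sub_sq N hN a v w, mul_pow]
    have h4 : (0:ℝ) ≤ (N:ℝ)^2 - 1 := by nlinarith
    have h5 : (0:ℝ) ≤ ((N:ℝ)^2 - 1) * (inner ℝ (v-w) (gPt N a) : ℝ)^2 / ‖gPt N a‖^2 := by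
      positivity
    gcongr
    linarith
  have h := Real.sqrt_le_sqrt hsq
  rwa [Real.sqrt_sq (by positivity), Real.sqrt_sq (norm_nonneg _)] at h

/-- plane embedding -/
def iot (N : ℕ) (j k : Fin N) (p : ℝ × ℝ) : E N := p.1 • gPt N j + p.2 • gPt N k
def tj (N : ℕ) (p : ℝ × ℝ) : ℝ × ℝ :=
  (((N:ℝ)+2)⁻¹ * ((N:ℝ)*p.1 - p.2 + 2), ((N:ℝ)+2)⁻¹ * p.2)
def tk (N : ℕ) (p : ℝ × ℝ) : ℝ × ℝ :=
  (((N:ℝ)+2)⁻¹ * p.1, ((N:ℝ)+2)⁻¹ * ((N:ℝ)*p.2 - p.1 + 2))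

theorem inner_iot (N : ℕ) (hN : 2 ≤ N) (j k : Fin N) (hjk : j ≠ k) (p : ℝ × ℝ) :
    (inner ℝ (iot N j k p) (gPt N j) : ℝ) = (((N:ℝ)-1)*p.1 - p.2)/(2*N) := by
  have hNne : (N:ℝ) ≠ 0 := by positivity
  simp only [iot, inner_add_left, real_inner_smul_left, inner_gPt N (by omega),
    if_pos rfl, if_neg hjk, if_neg (Ne.symm hjk)]
  field_simp; simp only [if_true]; ring

theorem gS_iot_j (N : ℕ) (hN : 2 ≤ N) (j k : Fin N) (hjk : j ≠ k) (p : ℝ × ℝ) :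
    gS N j (iot N j k p) = iot N j k (tj N p) := by
  have hNne : (N:ℝ) ≠ 0 := by positivity
  have hN1 : ((N:ℝ) - 1) ≠ 0 := by
    have : (2:ℝ) ≤ (N:ℝ) := by exact_mod_cast hN
    linarith
  rw [gS, inner_iot N hN j k hjk, norm_gPt_sq N (by omega)]
  simp only [iot, tj, smul_add, smul_smul]
  match_scalars
  · field_simp; ring
  · field_simp

theorem inner_iot_k (N : ℕ) (hN : 2 ≤ N) (j k : Fin N) (hjk : j ≠ k) (p : ℝ × ℝ) :
    (inner ℝ (iot N j k p) (gPt N k) : ℝ) = (((N:ℝ)-1)*p.2 - p.1)/(2*N) := by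
  have hNne : (N:ℝ) ≠ 0 := by positivity
  simp only [iot, inner_add_left, real_inner_smul_left, inner_gPt N (by omega),
    if_pos rfl, if_neg hjk, if_neg (Ne.symm hjk)]
  field_simp; simp only [if_true]; ring

theorem gS_iot_k (N : ℕ) (hN : 2 ≤ N) (j k : Fin N) (hjk : j ≠ k) (p : ℝ × ℝ) :
    gS N k (iot N j k p) = iot N j k (tk N p) := by
  have hNne : (N:ℝ) ≠ 0 := by positivity
  have hN1 : ((N:ℝ) - 1) ≠ 0 := by
    have : (2:ℝ) ≤ (N:ℝ) := by exact_mod_cast hN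
    linarith
  rw [gS, inner_iot_k N hN j k hjk, norm_gPt_sq N (by omega)]
  simp only [iot, tk, smul_add, smul_smul]
  match_scalars
  · field_simp
  · field_simp; ring

/-- norm of an embedded vector, cone bound -/
theorem norm_iot_le (N : ℕ) (hN : 2 ≤ N) (j k : Fin N) (hjk : j ≠ k) (p : ℝ × ℝ)
    (h1 : p.1 ≤ 0) (h2 : 0 ≤ p.2) : ‖iot N j k p‖ ≤ p.2 - p.1 := by
  have hNpos : (0:ℝ) < N := by positivity
  have hN2 : (2:ℝ) ≤ (N:ℝ) := by exact_mod_cast hN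
  have hsq : ‖iot N j k p‖^2 ≤ (p.2 - p.1)^2 := by
    have : ‖iot N j k p‖^2 = (((N:ℝ)-1)*(p.1^2 + p.2^2) - 2*p.1*p.2)/(2*(N:ℝ)) := by
      rw [iot, norm_add_sq_real, real_inner_smul_left, real_inner_smul_right,
        norm_smul, norm_smul, mul_pow, mul_pow, inner_gPt N (by omega), if_neg hjk]
      simp only [Real.norm_eq_abs, sq_abs]
      rw [norm_gPt_sq N (by omega), norm_gPt_sq N (by omega)]
      field_simp; ring
    rw [this, div_le_iff₀ (by positivity)]
    have hab : 0 ≤ -(p.1 * p.2) := by nlinarith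
    nlinarith [mul_nonneg (by linarith : (0:ℝ) ≤ 4*(N:ℝ)-2) hab,
      mul_nonneg (by linarith : (0:ℝ) ≤ (N:ℝ)+1) (by positivity : (0:ℝ) ≤ p.1^2+p.2^2)]
  have h := Real.sqrt_le_sqrt hsq
  rwa [Real.sqrt_sq (norm_nonneg _), Real.sqrt_sq (by linarith)] at h

/-- crude bound -/
theorem norm_iot_crude (N : ℕ) (hN : 2 ≤ N) (j k : Fin N) (p : ℝ × ℝ) :
    ‖iot N j k p‖ ≤ |p.1| + |p.2| := by
  have hN2 : (2:ℝ) ≤ (N:ℝ) := by exact_mod_cast hN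
  have key : ∀ a : Fin N, ‖gPt N a‖ ≤ 1 := by
    intro a
    have h := norm_gPt_sq N (by omega) a
    have h2 : ‖gPt N a‖^2 ≤ 1 := by
      rw [h, div_le_one (by positivity)]; linarith
    nlinarith [sq_nonneg (‖gPt N a‖ - 1), norm_nonneg (gPt N a)]
  have h1 := key j
  have h2 := key k
  calc ‖iot N j k p‖ ≤ ‖p.1 • gPt N j‖ + ‖p.2 • gPt N k‖ := norm_add_le _ _
    _ = |p.1| * ‖gPt N j‖ + |p.2| * ‖gPt N k‖ := by
        rw [norm_smul, norm_smul]; simp [Real.norm_eq_abs]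
    _ ≤ |p.1| * 1 + |p.2| * 1 := by gcongr
    _ = |p.1| + |p.2| := by ring

def gH (N : ℕ) : ℕ → ℝ → ℝ × ℝ
  | 0 => fun t => (1 - t, t)
  | n+1 => fun t => if t ≤ 1/2 then tj N (gH N n (2*t)) else tk N (gH N n (2*t-1))

variable {N : ℕ}

theorem gH_zero (n : ℕ) : gH N n 0 = (1, 0) := by
  induction n with
  | zero => simp [gH]
  | succ n ih =>
    simp only [gH, show (0:ℝ) ≤ 1/2 by norm_num, if_true, mul_zero, ih, tj]
    norm_num [inv_mul_cancel₀ (show ((N:ℝ)+2) ≠ 0 by positivity)]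

theorem gH_one (n : ℕ) : gH N n 1 = (0, 1) := by
  induction n with
  | zero => simp [gH]
  | succ n ih =>
    simp only [gH, show ¬((1:ℝ) ≤ 1/2) by norm_num, if_false]
    norm_num [ih, tk, inv_mul_cancel₀ (show ((N:ℝ)+2) ≠ 0 by positivity)]

theorem gH_succ_right (n : ℕ) {t : ℝ} (ht : 1/2 ≤ t) :
    gH N (n+1) t = tk N (gH N n (2*t - 1)) := by
  rcases eq_or_lt_of_le ht with h | h
  · rw [← h]
    show gH N (n+1) (1/2) = _
    simp only [gH, le_refl, if_true]
    norm_num [gH_one, gH_zero, tj, tk]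
  · simp only [gH, not_le.mpr h, if_false]

theorem gH_succ_left (n : ℕ) {t : ℝ} (ht : t ≤ 1/2) :
    gH N (n+1) t = tj N (gH N n (2*t)) := by
  simp only [gH, ht, if_true]

theorem gH_mem (hN : 2 ≤ N) (n : ℕ) {t : ℝ} (ht : t ∈ Set.Icc (0:ℝ) 1) :
    (gH N n t).1 ∈ Set.Icc (0:ℝ) 1 ∧ (gH N n t).2 ∈ Set.Icc (0:ℝ) 1 := by
  have hc : (0:ℝ) < (N:ℝ)+2 := by positivity
  have hkey : ∀ p : ℝ × ℝ, p.1 ∈ Set.Icc (0:ℝ) 1 → p.2 ∈ Set.Icc (0:ℝ) 1 →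
      ((tj N p).1 ∈ Set.Icc (0:ℝ) 1 ∧ (tj N p).2 ∈ Set.Icc (0:ℝ) 1) ∧
      ((tk N p).1 ∈ Set.Icc (0:ℝ) 1 ∧ (tk N p).2 ∈ Set.Icc (0:ℝ) 1) := by
    rintro p ⟨h1, h2⟩ ⟨h3, h4⟩
    have hN0 : (0:ℝ) ≤ N := Nat.cast_nonneg N
    have hb : ∀ A : ℝ, 0 ≤ A → A ≤ (N:ℝ)+2 → ((N:ℝ)+2)⁻¹ * A ∈ Set.Icc (0:ℝ) 1 := by
      intro A hA1 hA2
      constructor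
      · positivity
      · rw [← div_eq_inv_mul, div_le_one hc]; exact hA2
    refine ⟨⟨hb _ (by nlinarith) (by nlinarith), hb _ (by nlinarith) (by nlinarith)⟩,
      ⟨hb _ (by nlinarith) (by nlinarith), hb _ (by nlinarith) (by nlinarith)⟩⟩
  induction n generalizing t with
  | zero =>
    obtain ⟨h0, h1⟩ := ht
    exact ⟨⟨by simp [gH]; linarith, by simp [gH]; linarith⟩, ⟨h0, h1⟩⟩
  | succ n ih =>
    obtain ⟨h0, h1⟩ := ht
    by_cases h : t ≤ 1/2
    · rw [gH_succ_left n h]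
      have := ih (t := 2*t) ⟨by linarith, by linarith⟩
      exact ((hkey _ this.1 this.2).1)
    · rw [gH_succ_right n (by linarith)]
      have := ih (t := 2*t-1) ⟨by linarith [not_le.mp h], by linarith⟩
      exact ((hkey _ this.1 this.2).2)

/-- monotonicity of coordinates -/
theorem gH_mono (hN : 2 ≤ N) (n : ℕ) : ∀ {s t : ℝ}, s ∈ Set.Icc (0:ℝ) 1 →
    t ∈ Set.Icc (0:ℝ) 1 → s ≤ t →
    (gH N n t).1 ≤ (gH N n s).1 ∧ (gH N n s).2 ≤ (gH N n t).2 := by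
  have hc : (0:ℝ) ≤ ((N:ℝ)+2)⁻¹ := by positivity
  have hN0 : (0:ℝ) ≤ N := Nat.cast_nonneg N
  induction n with
  | zero => intro s t _ _ hst; constructor <;> simp [gH] <;> linarith
  | succ n ih =>
    have step : ∀ {s t : ℝ}, s ∈ Set.Icc (0:ℝ) 1 → t ∈ Set.Icc (0:ℝ) 1 → s ≤ t →
        (s ≤ 1/2 ∧ t ≤ 1/2) ∨ (1/2 ≤ s ∧ 1/2 ≤ t) →
        (gH N (n+1) t).1 ≤ (gH N (n+1) s).1 ∧ (gH N (n+1) s).2 ≤ (gH N (n+1) t).2 := by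
      rintro s t ⟨hs0, hs1⟩ ⟨ht0, ht1⟩ hst (⟨h1, h2⟩ | ⟨h1, h2⟩)
      · rw [gH_succ_left n h1, gH_succ_left n h2]
        obtain ⟨m1, m2⟩ := ih (s := 2*s) (t := 2*t) ⟨by linarith, by linarith⟩
          ⟨by linarith, by linarith⟩ (by linarith)
        constructor
        · simp only [tj]
          apply mul_le_mul_of_nonneg_left _ hc
          nlinarith [mul_le_mul_of_nonneg_left m1 hN0]
        · simp only [tj]
          apply mul_le_mul_of_nonneg_left m2 hc
      · rw [gH_succ_right n h1, gH_succ_right n h2]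
        obtain ⟨m1, m2⟩ := ih (s := 2*s-1) (t := 2*t-1) ⟨by linarith, by linarith⟩
          ⟨by linarith, by linarith⟩ (by linarith)
        constructor
        · simp only [tk]
          apply mul_le_mul_of_nonneg_left m1 hc
        · simp only [tk]
          apply mul_le_mul_of_nonneg_left _ hc
          nlinarith [mul_le_mul_of_nonneg_left m2 hN0]
    intro s t hs ht hst
    by_cases h1 : t ≤ 1/2
    · exact step hs ht hst (Or.inl ⟨by linarith [hst], h1⟩)
    by_cases h2 : 1/2 ≤ s
    · exact step hs ht hst (Or.inr ⟨h2, by linarith [not_le.mp h1]⟩)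
    · have hmid : (1/2 : ℝ) ∈ Set.Icc (0:ℝ) 1 := by norm_num
      have A := step hs hmid (by linarith [not_le.mp h2]) (Or.inl ⟨by linarith [not_le.mp h2], le_refl _⟩)
      have B := step hmid ht (by linarith [not_le.mp h1]) (Or.inr ⟨le_refl _, by linarith [not_le.mp h1]⟩)
      exact ⟨le_trans B.1 A.1, le_trans A.2 B.2⟩

theorem gH_continuous (n : ℕ) : Continuous (gH N n) := by
  have htj : Continuous (tj N) := by unfold tj; fun_prop
  have htk : Continuous (tk N) := by unfold tk; fun_prop
  induction n with
  | zero => unfold gH; fun_prop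
  | succ n ih =>
    show Continuous fun t => if t ≤ 1/2 then tj N (gH N n (2*t)) else tk N (gH N n (2*t-1))
    apply Continuous.if_le
    · fun_prop
    · fun_prop
    · exact continuous_id
    · exact continuous_const
    · intro t ht
      subst ht
      norm_num [gH_one, gH_zero, tj, tk]

theorem tj_lip (p q : ℝ × ℝ) :
    dist (tj N p) (tj N q) ≤ (((N:ℝ)+1)/((N:ℝ)+2)) * dist p q := by
  have hc : (0:ℝ) < (N:ℝ)+2 := by positivity
  have hN0 : (0:ℝ) ≤ N := Nat.cast_nonneg N
  rw [Prod.dist_eq, Prod.dist_eq]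
  set D1 := dist p.1 q.1
  set D2 := dist p.2 q.2
  have hD1 : 0 ≤ D1 := dist_nonneg
  have hD2 : 0 ≤ D2 := dist_nonneg
  have hd1 : dist (tj N p).1 (tj N q).1 ≤ (((N:ℝ)+1)/((N:ℝ)+2)) * max D1 D2 := by
    simp only [tj, Real.dist_eq]
    have : ((N:ℝ)+2)⁻¹ * ((N:ℝ)*p.1 - p.2 + 2) - ((N:ℝ)+2)⁻¹ * ((N:ℝ)*q.1 - q.2 + 2)
        = ((N:ℝ)+2)⁻¹ * ((N:ℝ)*(p.1 - q.1) - (p.2 - q.2)) := by ring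
    rw [this, abs_mul, abs_of_nonneg (by positivity)]
    have h1 : |(N:ℝ)*(p.1 - q.1) - (p.2 - q.2)| ≤ (N:ℝ)*D1 + D2 := by
      calc |(N:ℝ)*(p.1 - q.1) - (p.2 - q.2)| ≤ |(N:ℝ)*(p.1 - q.1)| + |p.2 - q.2| :=
            abs_sub _ _
        _ = (N:ℝ)*D1 + D2 := by
            rw [abs_mul, abs_of_nonneg hN0]; rfl
    calc ((N:ℝ)+2)⁻¹ * |(N:ℝ)*(p.1 - q.1) - (p.2 - q.2)| ≤ ((N:ℝ)+2)⁻¹ * ((N:ℝ)*D1 + D2) := by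
          apply mul_le_mul_of_nonneg_left h1 (by positivity)
      _ ≤ ((N:ℝ)+2)⁻¹ * (((N:ℝ)+1) * max D1 D2) := by
          apply mul_le_mul_of_nonneg_left _ (by positivity)
          have := le_max_left D1 D2
          have := le_max_right D1 D2
          nlinarith
      _ = (((N:ℝ)+1)/((N:ℝ)+2)) * max D1 D2 := by field_simp
  have hd2 : dist (tj N p).2 (tj N q).2 ≤ (((N:ℝ)+1)/((N:ℝ)+2)) * max D1 D2 := by
    simp only [tj, Real.dist_eq]
    have : ((N:ℝ)+2)⁻¹ * p.2 - ((N:ℝ)+2)⁻¹ * q.2 = ((N:ℝ)+2)⁻¹ * (p.2 - q.2) := by ring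
    rw [this, abs_mul, abs_of_nonneg (by positivity)]
    have h2 : |p.2 - q.2| = D2 := rfl
    rw [h2]
    calc ((N:ℝ)+2)⁻¹ * D2 ≤ ((N:ℝ)+2)⁻¹ * (((N:ℝ)+1) * max D1 D2) := by
          apply mul_le_mul_of_nonneg_left _ (by positivity)
          have := le_max_right D1 D2
          nlinarith
      _ = (((N:ℝ)+1)/((N:ℝ)+2)) * max D1 D2 := by field_simp
  exact max_le hd1 hd2

theorem tk_lip (p q : ℝ × ℝ) :
    dist (tk N p) (tk N q) ≤ (((N:ℝ)+1)/((N:ℝ)+2)) * dist p q := by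
  have key : ∀ r : ℝ × ℝ, tk N r = (tj N r.swap).swap := by
    intro r; simp [tk, tj, Prod.swap]
  rw [key p, key q]
  have hsw : ∀ a b : ℝ × ℝ, dist a.swap b.swap = dist a b := by
    intro a b; rw [Prod.dist_eq, Prod.dist_eq]; exact max_comm _ _
  rw [hsw]
  calc dist (tj N p.swap) (tj N q.swap) ≤ (((N:ℝ)+1)/((N:ℝ)+2)) * dist p.swap q.swap :=
        tj_lip _ _
    _ = (((N:ℝ)+1)/((N:ℝ)+2)) * dist p q := by rw [hsw]

theorem gH_cauchy_step (hN : 2 ≤ N) (n : ℕ) {t : ℝ} (ht : t ∈ Set.Icc (0:ℝ) 1) :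
    dist (gH N (n+1) t) (gH N n t) ≤ 2 * (((N:ℝ)+1)/((N:ℝ)+2))^n := by
  induction n generalizing t with
  | zero =>
    obtain ⟨m1, m2⟩ := gH_mem hN 1 ht
    obtain ⟨m3, m4⟩ := gH_mem hN 0 ht
    rw [Prod.dist_eq]
    rw [pow_zero, mul_one]
    apply max_le
    · rw [Real.dist_eq]
      rw [abs_le]
      constructor <;> [linarith [m1.1, m1.2, m3.1, m3.2]; linarith [m1.1, m1.2, m3.1, m3.2]]
    · rw [Real.dist_eq, abs_le]
      constructor <;> [linarith [m2.1, m2.2, m4.1, m4.2]; linarith [m2.1, m2.2, m4.1, m4.2]]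
  | succ n ih =>
    obtain ⟨h0, h1⟩ := ht
    by_cases h : t ≤ 1/2
    · rw [gH_succ_left (n+1) h, gH_succ_left n h]
      calc dist (tj N (gH N (n+1) (2*t))) (tj N (gH N n (2*t)))
          ≤ (((N:ℝ)+1)/((N:ℝ)+2)) * dist (gH N (n+1) (2*t)) (gH N n (2*t)) := tj_lip _ _
        _ ≤ (((N:ℝ)+1)/((N:ℝ)+2)) * (2 * (((N:ℝ)+1)/((N:ℝ)+2))^n) := by
            apply mul_le_mul_of_nonneg_left (ih ⟨by linarith, by linarith⟩) (by positivity)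
        _ = 2 * (((N:ℝ)+1)/((N:ℝ)+2))^(n+1) := by ring
    · have h' : 1/2 ≤ t := by linarith [not_le.mp h]
      rw [gH_succ_right (n+1) h', gH_succ_right n h']
      calc dist (tk N (gH N (n+1) (2*t-1))) (tk N (gH N n (2*t-1)))
          ≤ (((N:ℝ)+1)/((N:ℝ)+2)) * dist (gH N (n+1) (2*t-1)) (gH N n (2*t-1)) := tk_lip _ _
        _ ≤ (((N:ℝ)+1)/((N:ℝ)+2)) * (2 * (((N:ℝ)+1)/((N:ℝ)+2))^n) := by
            apply mul_le_mul_of_nonneg_left (ih ⟨by linarith, by linarith⟩) (by positivity)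
        _ = 2 * (((N:ℝ)+1)/((N:ℝ)+2))^(n+1) := by ring

def gHlim (N : ℕ) (t : ℝ) : ℝ × ℝ := limUnder atTop (fun n => gH N n t)

theorem gq_lt_one (hN : 2 ≤ N) : (((N:ℝ)+1)/((N:ℝ)+2)) < 1 := by
  rw [div_lt_one (by positivity)]; linarith

theorem gH_tendsto (hN : 2 ≤ N) {t : ℝ} (ht : t ∈ Set.Icc (0:ℝ) 1) :
    Tendsto (fun n => gH N n t) atTop (nhds (gHlim N t)) := by
  have hcs : CauchySeq (fun n => gH N n t) := by
    apply cauchySeq_of_le_geometric (((N:ℝ)+1)/((N:ℝ)+2)) 2 (gq_lt_one hN)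
    intro n
    rw [dist_comm]
    exact gH_cauchy_step hN n ht
  exact hcs.tendsto_limUnder

theorem gH_dist_lim (hN : 2 ≤ N) {t : ℝ} (ht : t ∈ Set.Icc (0:ℝ) 1) (n : ℕ) :
    dist (gH N n t) (gHlim N t) ≤
      2 * (((N:ℝ)+1)/((N:ℝ)+2))^n / (1 - ((N:ℝ)+1)/((N:ℝ)+2)) := by
  exact dist_le_of_le_geometric_of_tendsto (f := fun n => gH N n t)
    (((N:ℝ)+1)/((N:ℝ)+2)) 2 (gq_lt_one hN)
    (fun m => by rw [dist_comm]; exact gH_cauchy_step hN m ht) (gH_tendsto hN ht) n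

theorem gH_unif (hN : 2 ≤ N) :
    TendstoUniformlyOn (fun n t => gH N n t) (gHlim N) atTop (Set.Icc (0:ℝ) 1) := by
  rw [Metric.tendstoUniformlyOn_iff]
  intro ε hε
  have hq1 : (((N:ℝ)+1)/((N:ℝ)+2)) < 1 := gq_lt_one hN
  have hq0 : (0:ℝ) ≤ (((N:ℝ)+1)/((N:ℝ)+2)) := by positivity
  have htend : Tendsto (fun n : ℕ => 2 * (((N:ℝ)+1)/((N:ℝ)+2))^n / (1 - ((N:ℝ)+1)/((N:ℝ)+2)))
      atTop (nhds 0) := by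
    have h1 : Tendsto (fun n : ℕ => (((N:ℝ)+1)/((N:ℝ)+2))^n) atTop (nhds 0) :=
      tendsto_pow_atTop_nhds_zero_of_lt_one hq0 hq1
    have := (h1.const_mul 2).div_const (1 - ((N:ℝ)+1)/((N:ℝ)+2))
    simpa using this
  filter_upwards [htend.eventually (eventually_lt_nhds hε)] with n hn t ht
  rw [dist_comm]
  exact lt_of_le_of_lt (gH_dist_lim hN ht n) hn

theorem gHlim_continuousOn (hN : 2 ≤ N) : ContinuousOn (gHlim N) (Set.Icc (0:ℝ) 1) :=
  (gH_unif hN).continuousOn (Eventually.of_forall fun n => (gH_continuous n).continuousOn).frequently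

theorem gHlim_zero (hN : 2 ≤ N) : gHlim N 0 = (1, 0) := by
  have h1 := gH_tendsto hN (t := 0) (by norm_num)
  have h2 : Tendsto (fun n => gH N n 0) atTop (nhds ((1:ℝ), (0:ℝ))) := by
    simp only [gH_zero]; exact tendsto_const_nhds
  exact tendsto_nhds_unique h1 h2

theorem gHlim_one (hN : 2 ≤ N) : gHlim N 1 = (0, 1) := by
  have h1 := gH_tendsto hN (t := 1) (by norm_num)
  have h2 : Tendsto (fun n => gH N n 1) atTop (nhds ((0:ℝ), (1:ℝ))) := by
    simp only [gH_one]; exact tendsto_const_nhds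
  exact tendsto_nhds_unique h1 h2

theorem gHlim_mono (hN : 2 ≤ N) {s t : ℝ} (hs : s ∈ Set.Icc (0:ℝ) 1)
    (ht : t ∈ Set.Icc (0:ℝ) 1) (hst : s ≤ t) :
    (gHlim N t).1 ≤ (gHlim N s).1 ∧ (gHlim N s).2 ≤ (gHlim N t).2 := by
  have hsl := gH_tendsto hN hs
  have htl := gH_tendsto hN ht
  constructor
  · exact le_of_tendsto_of_tendsto ((continuous_fst.tendsto _).comp htl)
      ((continuous_fst.tendsto _).comp hsl)
      (Eventually.of_forall fun n => (gH_mono hN n hs ht hst).1)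
  · exact le_of_tendsto_of_tendsto ((continuous_snd.tendsto _).comp hsl)
      ((continuous_snd.tendsto _).comp htl)
      (Eventually.of_forall fun n => (gH_mono hN n hs ht hst).2)

/-- variation bound from a controlling increment function -/
theorem evar_le_control {N : ℕ} (γ : ℝ → E N) (V : ℝ → ℝ)
    (h : ∀ s t : ℝ, s ∈ Set.Icc (0:ℝ) 1 → t ∈ Set.Icc (0:ℝ) 1 → s ≤ t →
      dist (γ s) (γ t) ≤ V t - V s) :
    eVariationOn γ (Set.Icc (0:ℝ) 1) ≤ ENNReal.ofReal (V 1 - V 0) := by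
  apply iSup_le
  rintro ⟨n, u, hu, us⟩
  have hincr : ∀ s t : ℝ, s ∈ Set.Icc (0:ℝ) 1 → t ∈ Set.Icc (0:ℝ) 1 → s ≤ t →
      0 ≤ V t - V s := fun s t hs ht hst => le_trans dist_nonneg (h s t hs ht hst)
  calc ∑ i ∈ Finset.range n, edist (γ (u (i+1))) (γ (u i))
      ≤ ∑ i ∈ Finset.range n, ENNReal.ofReal (V (u (i+1)) - V (u i)) := by
        apply Finset.sum_le_sum
        intro i _
        rw [edist_dist, dist_comm]
        exact ENNReal.ofReal_le_ofReal (h _ _ (us i) (us (i+1)) (hu (Nat.le_succ i)))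
    _ = ENNReal.ofReal (∑ i ∈ Finset.range n, (V (u (i+1)) - V (u i))) := by
        rw [ENNReal.ofReal_sum_of_nonneg
          (fun i _ => hincr _ _ (us i) (us (i+1)) (hu (Nat.le_succ i)))]
    _ = ENNReal.ofReal (V (u n) - V (u 0)) := by
        rw [Finset.sum_range_sub (fun i => V (u i))]
    _ ≤ ENNReal.ofReal (V 1 - V 0) := by
        apply ENNReal.ofReal_le_ofReal
        have h1 := hincr 0 (u 0) (by norm_num) (us 0) (us 0).1
        have h2 := hincr (u n) 1 (us n) (by norm_num) (us n).2
        linarith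

theorem iot_sub (N : ℕ) (j k : Fin N) (p q : ℝ × ℝ) :
    iot N j k p - iot N j k q = iot N j k (p - q) := by
  simp only [iot, Prod.fst_sub, Prod.snd_sub, sub_smul]
  abel

theorem iot_continuous (N : ℕ) (j k : Fin N) : Continuous (iot N j k) := by
  unfold iot; fun_prop

theorem gS_continuous (N : ℕ) (a : Fin N) : Continuous (gS N a) := by
  unfold gS
  have h : Continuous fun x : E N => (inner ℝ x (gPt N a) : ℝ) :=
    continuous_id.inner continuous_const
  fun_prop

theorem gSlist_continuous (N : ℕ) (w : List (Fin N)) : Continuous (gSlist N w) := by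
  induction w with
  | nil => exact continuous_id
  | cons a t ih => exact (gS_continuous N a).comp ih

theorem gSlist_lip (N : ℕ) (hN : 2 ≤ N) (w : List (Fin N)) (u v : E N) :
    ‖gSlist N w u - gSlist N w v‖ ≤ ((N:ℝ)/((N:ℝ)+2))^w.length * ‖u - v‖ := by
  induction w with
  | nil => simp [gSlist]
  | cons a t ih =>
    calc ‖gSlist N (a :: t) u - gSlist N (a :: t) v‖
        ≤ ((N:ℝ)/((N:ℝ)+2)) * ‖gSlist N t u - gSlist N t v‖ :=
          norm_gS_sub_le N hN a _ _
      _ ≤ ((N:ℝ)/((N:ℝ)+2)) * (((N:ℝ)/((N:ℝ)+2))^t.length * ‖u - v‖) := by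
          apply mul_le_mul_of_nonneg_left ih (by positivity)
      _ = ((N:ℝ)/((N:ℝ)+2))^(a :: t).length * ‖u - v‖ := by
          rw [List.length_cons, pow_succ]; ring

theorem gSlist_ge (N : ℕ) (hN : 2 ≤ N) (w : List (Fin N)) (u v : E N) :
    (((N:ℝ)+2)⁻¹)^w.length * ‖u - v‖ ≤ ‖gSlist N w u - gSlist N w v‖ := by
  induction w with
  | nil => simp [gSlist]
  | cons a t ih =>
    calc (((N:ℝ)+2)⁻¹)^(a :: t).length * ‖u - v‖
        = ((N:ℝ)+2)⁻¹ * ((((N:ℝ)+2)⁻¹)^t.length * ‖u - v‖) := by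
          rw [List.length_cons, pow_succ]; ring
      _ ≤ ((N:ℝ)+2)⁻¹ * ‖gSlist N t u - gSlist N t v‖ := by
          apply mul_le_mul_of_nonneg_left ih (by positivity)
      _ ≤ ‖gSlist N (a :: t) u - gSlist N (a :: t) v‖ :=
          norm_gS_sub_ge N hN a _ _

/-- quantitative form of Corollary 2.10: between the vertices
`S_w(p_j)` and `S_w(p_k)` of the cell `S_w(X)` there is a path in `X` of length
at most `2 (N/(N+2))^m`, and every such path has length at least `(N+2)^{-m}`. -/
theorem cell_geodesic_bounds (N : ℕ) (hN : 2 ≤ N)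
    (X : Set (E N)) (hXne : X.Nonempty) (hXc : IsCompact X)
    (hXinv : X = ⋃ j : Fin N, gS N j '' X)
    (w : List (Fin N)) (j k : Fin N) (hjk : j < k) :
    (∃ γ : ℝ → E N,
      ContinuousOn γ (Icc (0 : ℝ) 1) ∧
      γ '' Icc (0 : ℝ) 1 ⊆ X ∧
      γ 0 = gSlist N w (gPt N j) ∧
      γ 1 = gSlist N w (gPt N k) ∧
      eVariationOn γ (Icc (0 : ℝ) 1) ≤
        ENNReal.ofReal (2 * ((N : ℝ) / ((N : ℝ) + 2)) ^ w.length)) ∧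
    ‖gSlist N w (gPt N j) - gSlist N w (gPt N k)‖ ≥ (((N : ℝ) + 2) ^ w.length)⁻¹ ∧
    ∀ σ : ℝ → E N, ContinuousOn σ (Icc (0 : ℝ) 1) → σ '' Icc (0 : ℝ) 1 ⊆ X →
      σ 0 = gSlist N w (gPt N j) → σ 1 = gSlist N w (gPt N k) →
      ENNReal.ofReal ((((N : ℝ) + 2) ^ w.length)⁻¹) ≤ eVariationOn σ (Icc (0 : ℝ) 1) := by
  have hjk' : j ≠ k := ne_of_lt hjk
  set r : ℝ := (N:ℝ)/((N:ℝ)+2) with hr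
  have hr0 : 0 ≤ r := by positivity
  have hr1 : r < 1 := by rw [hr, div_lt_one (by positivity)]; linarith
  have hginvX : ∀ (a : Fin N) {x : E N}, x ∈ X → gS N a x ∈ X := by
    intro a x hx
    rw [hXinv]
    exact mem_iUnion.mpr ⟨a, mem_image_of_mem _ hx⟩
  have hSlistX : ∀ {x : E N}, x ∈ X → gSlist N w x ∈ X := by
    intro x hx
    induction w with
    | nil => exact hx
    | cons a t ih => exact hginvX a ih
  -- lower bound on distance between images
  have hlow : (((N : ℝ) + 2) ^ w.length)⁻¹ ≤
      ‖gSlist N w (gPt N j) - gSlist N w (gPt N k)‖ := by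
    have := gSlist_ge N hN w (gPt N j) (gPt N k)
    rw [norm_gPt_sub N (by omega) j k hjk', mul_one] at this
    rwa [← inv_pow]
  refine ⟨?_, hlow, ?_⟩
  · -- existence of the path
    refine ⟨fun t => gSlist N w (iot N j k (gHlim N t)), ?_, ?_, ?_, ?_, ?_⟩
    · exact (gSlist_continuous N w).comp_continuousOn
        ((iot_continuous N j k).comp_continuousOn (gHlim_continuousOn hN))
    · -- image in X
      rintro y ⟨t, ht, rfl⟩
      apply hSlistX
      -- show iot (gHlim t) ∈ X
      have hSd : ∀ (a : Fin N) (y : E N),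
          Metric.infDist (gS N a y) X ≤ r * Metric.infDist y X := by
        intro a y
        obtain ⟨x, hxX, hxd⟩ := hXc.exists_infDist_eq_dist hXne y
        calc Metric.infDist (gS N a y) X ≤ dist (gS N a y) (gS N a x) :=
              Metric.infDist_le_dist_of_mem (hginvX a hxX)
          _ ≤ r * dist y x := by
              rw [dist_eq_norm, dist_eq_norm]; exact norm_gS_sub_le N hN a y x
          _ = r * Metric.infDist y X := by rw [hxd]
      set C₀ : ℝ := Metric.infDist (0 : E N) X + 2 with hC₀def
      have hbase : ∀ n : ℕ, ∀ t ∈ Icc (0:ℝ) 1,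
          Metric.infDist (iot N j k (gH N n t)) X ≤ r^n * C₀ := by
        intro n
        induction n with
        | zero =>
          intro t ht
          rw [pow_zero, one_mul, hC₀def]
          calc Metric.infDist (iot N j k (gH N 0 t)) X
              ≤ Metric.infDist (0 : E N) X + dist (iot N j k (gH N 0 t)) 0 :=
                Metric.infDist_le_infDist_add_dist
            _ ≤ Metric.infDist (0 : E N) X + 2 := by
                have hb := norm_iot_crude N hN j k (gH N 0 t)
                rw [dist_zero_right]
                have h1 : |(gH N 0 t).1| ≤ 1 := by
                  obtain ⟨m1, _⟩ := gH_mem hN 0 ht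
                  rw [abs_le]; exact ⟨by linarith [m1.1], m1.2⟩
                have h2 : |(gH N 0 t).2| ≤ 1 := by
                  obtain ⟨_, m2⟩ := gH_mem hN 0 ht
                  rw [abs_le]; exact ⟨by linarith [m2.1], m2.2⟩
                linarith
        | succ n ih =>
          intro t ht
          obtain ⟨ht0, ht1⟩ := ht
          by_cases h : t ≤ 1/2
          · rw [gH_succ_left n h, ← gS_iot_j N hN j k hjk']
            calc Metric.infDist (gS N j (iot N j k (gH N n (2*t)))) X
                ≤ r * Metric.infDist (iot N j k (gH N n (2*t))) X := hSd j _
              _ ≤ r * (r^n * C₀) := by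
                  apply mul_le_mul_of_nonneg_left (ih (2*t) ⟨by linarith, by linarith⟩) hr0
              _ = r^(n+1) * C₀ := by ring
          · have h' : 1/2 ≤ t := by linarith [not_le.mp h]
            rw [gH_succ_right n h', ← gS_iot_k N hN j k hjk']
            calc Metric.infDist (gS N k (iot N j k (gH N n (2*t-1)))) X
                ≤ r * Metric.infDist (iot N j k (gH N n (2*t-1))) X := hSd k _
              _ ≤ r * (r^n * C₀) := by
                  apply mul_le_mul_of_nonneg_left (ih (2*t-1) ⟨by linarith, by linarith⟩) hr0
              _ = r^(n+1) * C₀ := by ring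
      have htends : Tendsto (fun n => Metric.infDist (iot N j k (gH N n t)) X) atTop
          (nhds (Metric.infDist (iot N j k (gHlim N t)) X)) := by
        have hcont : Continuous fun p : ℝ × ℝ => Metric.infDist (iot N j k p) X :=
          (Metric.continuous_infDist_pt X).comp (iot_continuous N j k)
        exact (hcont.tendsto _).comp (gH_tendsto hN ht)
      have hz : Tendsto (fun n : ℕ => r^n * C₀) atTop (nhds 0) := by
        have := (tendsto_pow_atTop_nhds_zero_of_lt_one hr0 hr1).mul_const C₀
        simpa using this
      have hle0 : Metric.infDist (iot N j k (gHlim N t)) X ≤ 0 :=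
        le_of_tendsto_of_tendsto htends hz
          (Eventually.of_forall fun n => hbase n t ht)
      rw [(hXc.isClosed.mem_iff_infDist_zero hXne)]
      exact le_antisymm hle0 Metric.infDist_nonneg
    · -- γ 0
      show gSlist N w (iot N j k (gHlim N 0)) = gSlist N w (gPt N j)
      rw [gHlim_zero hN]
      simp [iot]
    · -- γ 1
      show gSlist N w (iot N j k (gHlim N 1)) = gSlist N w (gPt N k)
      rw [gHlim_one hN]
      simp [iot]
    · -- variation bound
      have hcontrol : ∀ s t : ℝ, s ∈ Icc (0:ℝ) 1 → t ∈ Icc (0:ℝ) 1 → s ≤ t →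
          dist (gSlist N w (iot N j k (gHlim N s))) (gSlist N w (iot N j k (gHlim N t))) ≤
            (fun u => r^w.length * ((gHlim N u).2 - (gHlim N u).1)) t -
            (fun u => r^w.length * ((gHlim N u).2 - (gHlim N u).1)) s := by
        intro s t hs ht hst
        obtain ⟨m1, m2⟩ := gHlim_mono hN hs ht hst
        have hcone : ‖iot N j k (gHlim N s) - iot N j k (gHlim N t)‖ ≤
            ((gHlim N t).2 - (gHlim N s).2) - ((gHlim N t).1 - (gHlim N s).1) := by
          rw [norm_sub_rev, iot_sub]
          have := norm_iot_le N hN j k hjk' (gHlim N t - gHlim N s)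
            (by rw [Prod.fst_sub]; linarith) (by rw [Prod.snd_sub]; linarith)
          rw [Prod.fst_sub, Prod.snd_sub] at this
          linarith
        calc dist (gSlist N w (iot N j k (gHlim N s))) (gSlist N w (iot N j k (gHlim N t)))
            = ‖gSlist N w (iot N j k (gHlim N s)) - gSlist N w (iot N j k (gHlim N t))‖ :=
              dist_eq_norm _ _
          _ ≤ r^w.length * ‖iot N j k (gHlim N s) - iot N j k (gHlim N t)‖ :=
              gSlist_lip N hN w _ _
          _ ≤ r^w.length * (((gHlim N t).2 - (gHlim N s).2) - ((gHlim N t).1 - (gHlim N s).1)) := by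
              apply mul_le_mul_of_nonneg_left hcone (by positivity)
          _ = r^w.length * ((gHlim N t).2 - (gHlim N t).1) -
              r^w.length * ((gHlim N s).2 - (gHlim N s).1) := by ring
      have := evar_le_control (fun t => gSlist N w (iot N j k (gHlim N t)))
        (fun u => r^w.length * ((gHlim N u).2 - (gHlim N u).1)) hcontrol
      calc eVariationOn (fun t => gSlist N w (iot N j k (gHlim N t))) (Icc (0:ℝ) 1)
          ≤ ENNReal.ofReal (r^w.length * ((gHlim N 1).2 - (gHlim N 1).1) -
              r^w.length * ((gHlim N 0).2 - (gHlim N 0).1)) := this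
        _ = ENNReal.ofReal (2 * r ^ w.length) := by
            rw [gHlim_zero hN, gHlim_one hN]
            norm_num
            ring_nf
            rw [ENNReal.ofReal_mul' (by norm_num), ENNReal.ofReal_ofNat]
  · -- lower bound for any path
    intro σ hσc hσim h0 h1
    have hedist := eVariationOn.edist_le σ (show (0:ℝ) ∈ Icc (0:ℝ) 1 by norm_num)
      (show (1:ℝ) ∈ Icc (0:ℝ) 1 by norm_num)
    calc ENNReal.ofReal ((((N : ℝ) + 2) ^ w.length)⁻¹)
        ≤ ENNReal.ofReal (dist (σ 0) (σ 1)) := by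
          apply ENNReal.ofReal_le_ofReal
          rw [dist_eq_norm, h0, h1]
          exact hlow
      _ = edist (σ 0) (σ 1) := (edist_dist _ _).symm
      _ ≤ eVariationOn σ (Icc (0:ℝ) 1) := hedist
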